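/- For d ≥ 1 and u, v even-weight vectors in F_2^{3d} with wt(u) = wt(v) = 2d and wt(u+v) = 2d, there is a unique even-weight vector w with wt(w) = 2d, wt(w + u) = 2d, and wt(w + v) = 2d, namely w = u + v; equivalently, every edge of this graph through the zero vector lies in a unique triangle. -/

import Mathlib

open Finset
open scoped symmDiff

/-- Hamming weight of a binary vector. -/
def wt {n : ℕ} (v : Fin n → ZMod 2) : ℕ := (Finset.univ.filter fun i => v i ≠ 0).card

/-- The graph on the even-weight binary vectors of length `n`,
adjacent when their difference has Hamming weight `k`. -/
def evenGraph (n k : ℕ) : SimpleGraph {v : Fin n → ZMod 2 // Even (wt v)} where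
  Adj u v := u ≠ v ∧ wt (u.val + v.val) = k
  symm := ⟨fun _ _ h => ⟨h.1.symm, by rw [add_comm]; exact h.2⟩⟩
  loopless := ⟨fun _ h => h.1 rfl⟩

lemma supp_add {n : ℕ} (a b : Fin n → ZMod 2) :
    (Finset.univ.filter fun i => (a + b) i ≠ 0) =
      (Finset.univ.filter fun i => a i ≠ 0) ∆ (Finset.univ.filter fun i => b i ≠ 0) := by
  ext i
  simp only [mem_filter, mem_univ, true_and, Finset.mem_symmDiff, Pi.add_apply]
  generalize a i = x; generalize b i = y
  revert x y; decide

lemma card_symmDiff' {n : ℕ} (s t : Finset (Fin n)) :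
    (s ∆ t).card + 2 * (s ∩ t).card = s.card + t.card := by
  have h1 : s ∆ t = (s \ t) ∪ (t \ s) := by
    ext i; simp [Finset.mem_symmDiff]
  have h2 : Disjoint (s \ t) (t \ s) := by
    simp [Finset.disjoint_left]; tauto
  rw [h1, Finset.card_union_of_disjoint h2]
  have h3 := Finset.card_sdiff_add_card_inter s t
  have h4 := Finset.card_sdiff_add_card_inter t s
  rw [Finset.inter_comm] at h4
  omega

/-- For even-weight vectors `u, v` of weight `2d` in `F_2^{3d}` with `wt(u+v) = 2d`,
the unique even-weight vector `w` of weight `2d` with `wt(w+u) = wt(w+v) = 2d` is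
`w = u + v`: every edge through the zero vector lies in a unique triangle. -/
theorem evenGraph_unique_triangle (d : ℕ) (hd : 1 ≤ d)
    (u v : Fin (3 * d) → ZMod 2) (hu : Even (wt u)) (hv : Even (wt v))
    (hwu : wt u = 2 * d) (hwv : wt v = 2 * d) (huv : wt (u + v) = 2 * d) :
    ∀ w : Fin (3 * d) → ZMod 2,
      (Even (wt w) ∧ wt w = 2 * d ∧ wt (w + u) = 2 * d ∧ wt (w + v) = 2 * d) ↔
        w = u + v := by
  intro w
  constructor
  · rintro ⟨-, hw, hwu', hwv'⟩
    set S := Finset.univ.filter (fun i => u i ≠ 0) with hS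
    set T := Finset.univ.filter (fun i => v i ≠ 0) with hT
    set W := Finset.univ.filter (fun i => w i ≠ 0) with hW
    have hcardS : S.card = 2 * d := hwu
    have hcardT : T.card = 2 * d := hwv
    have hcardW : W.card = 2 * d := hw
    have hST : (S ∆ T).card = 2 * d := by rw [← supp_add]; exact huv
    have hWS : (W ∆ S).card = 2 * d := by rw [← supp_add]; exact hwu'
    have hWT : (W ∆ T).card = 2 * d := by rw [← supp_add]; exact hwv'
    have e1 := card_symmDiff' S T
    have e2 := card_symmDiff' W S
    have e3 := card_symmDiff' W T
    have hSTi : (S ∩ T).card = d := by omega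
    have hWSi : (W ∩ S).card = d := by omega
    have hWTi : (W ∩ T).card = d := by omega
    -- S ∪ T = univ
    have hunion : S ∪ T = Finset.univ := by
      rw [← Finset.card_eq_iff_eq_univ]
      have := Finset.card_union_add_card_inter S T
      simp only [Fintype.card_fin]
      omega
    -- W ∩ S ∩ T = ∅
    have hinter : (W ∩ S) ∩ (W ∩ T) = ∅ := by
      rw [← Finset.card_eq_zero]
      have h5 : (W ∩ S) ∪ (W ∩ T) = W := by
        rw [← Finset.inter_union_distrib_left, hunion, Finset.inter_univ]
      have := Finset.card_union_add_card_inter (W ∩ S) (W ∩ T)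
      rw [h5] at this
      omega
    have hsub : W ⊆ S ∆ T := by
      intro i hi
      have hiu : i ∈ S ∪ T := hunion ▸ Finset.mem_univ i
      rw [Finset.mem_union] at hiu
      have hnot : ¬ (i ∈ S ∧ i ∈ T) := by
        rintro ⟨h1, h2⟩
        have : i ∈ (W ∩ S) ∩ (W ∩ T) := by simp [hi, h1, h2]
        rw [hinter] at this
        exact absurd this (Finset.notMem_empty i)
      rw [Finset.mem_symmDiff]
      tauto
    have hWeq : W = S ∆ T := Finset.eq_of_subset_of_card_le hsub (by omega)
    funext i
    have hmem : (i ∈ W) ↔ (i ∈ Finset.univ.filter fun j => (u + v) j ≠ 0) := by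
      rw [supp_add, hWeq]
    simp only [hW, mem_filter, mem_univ, true_and] at hmem
    have key : ∀ x y : ZMod 2, ((¬ x = 0) ↔ (¬ y = 0)) → x = y := by decide
    exact key _ _ hmem
  · rintro rfl
    have h2 : ∀ x y : ZMod 2, x + y + x = y := by decide
    have e1 : u + v + u = v := by funext i; exact h2 _ _
    have e2 : u + v + v = u := by
      funext i
      simp only [Pi.add_apply]
      generalize u i = x; generalize v i = y; revert x y; decide
    refine ⟨huv ▸ even_two_mul d, huv, ?_, ?_⟩
    · rw [e1]; exact hwv
    · rw [e2]; exact hwu
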